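/- Let d ≥ 1 and let f be a real polynomial of degree d in one variable with nonnegative coefficients, f(1) = 1, and all complex roots of f real. Let C := inf_{t > 0} f(t)/t. Then f′(0) ≥ ((d−1)/d)^{d−1} · C. -/

import Mathlib

open Polynomial Finset


/-- A real polynomial all of whose complex roots are real splits over ℝ. -/
lemma gurvits_splits : ∀ (n : ℕ) (f : ℝ[X]), f.natDegree = n →
    (∀ z : ℂ, Polynomial.aeval z f = 0 → z.im = 0) → f.Splits := by
  intro n
  induction n with
  | zero => exact fun f hdeg _ => Splits.of_natDegree_le_one (by omega)
  | succ n ih =>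
    intro f hdeg hroots
    have hf0 : f ≠ 0 := fun h => by simp [h] at hdeg
    have hdegpos : 0 < (f.map (algebraMap ℝ ℂ)).degree := by
      rw [degree_map]
      exact natDegree_pos_iff_degree_pos.mp (by omega)
    obtain ⟨z, hz⟩ := Complex.exists_root hdegpos
    have hz' : Polynomial.aeval z f = 0 := by
      rwa [IsRoot, eval_map, ← aeval_def] at hz
    have him := hroots z hz'
    have hzx : z = ((z.re : ℝ) : ℂ) := by
      apply Complex.ext <;> simp [him]
    have hx : f.IsRoot z.re := by
      have h2 : Polynomial.aeval ((z.re : ℝ) : ℂ) f = 0 := hzx ▸ hz'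
      rw [← Complex.coe_algebraMap, aeval_algebraMap_apply_eq_algebraMap_eval] at h2
      have := (map_eq_zero_iff _ (algebraMap ℝ ℂ).injective).mp h2
      exact this
    obtain ⟨g, hg⟩ := dvd_iff_isRoot.mpr hx
    have hgne : g ≠ 0 := fun h => hf0 (by rw [hg, h, mul_zero])
    have hgdeg : g.natDegree = n := by
      have := natDegree_mul (X_sub_C_ne_zero z.re) hgne
      rw [← hg, natDegree_X_sub_C] at this
      omega
    have hgroots : ∀ w : ℂ, Polynomial.aeval w g = 0 → w.im = 0 := by
      intro w hw
      exact hroots w (by rw [hg, map_mul, hw, mul_zero])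
    rw [hg]
    exact (Splits.X_sub_C _).mul (ih g hgdeg hgroots)


/-- AM-GM: product over `Fin d` of nonneg reals is at most `(sum/d)^d`. -/
lemma gurvits_amgm (d : ℕ) (hd : 0 < d) (z : Fin d → ℝ) (hz : ∀ i, 0 ≤ z i) :
    ∏ i, z i ≤ ((∑ i, z i) / d) ^ d := by
  have hw : ∀ i ∈ (univ : Finset (Fin d)), (0:ℝ) ≤ (d : ℝ)⁻¹ := by
    intro i _; positivity
  have hw' : ∑ _i ∈ (univ : Finset (Fin d)), ((d : ℝ)⁻¹) = 1 := by
    simp [Finset.card_univ]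
    field_simp
  have h := Real.geom_mean_le_arith_mean_weighted univ (fun _ => (d:ℝ)⁻¹) z hw hw'
    (fun i _ => hz i)
  have hL : (∏ i, z i ^ ((d:ℝ)⁻¹)) ^ d = ∏ i, z i := by
    rw [← Finset.prod_pow]
    refine Finset.prod_congr rfl fun i _ => ?_
    rw [← Real.rpow_natCast (z i ^ ((d:ℝ)⁻¹)) d, ← Real.rpow_mul (hz i),
      inv_mul_cancel₀ (by positivity), Real.rpow_one]
  calc ∏ i, z i = (∏ i, z i ^ ((d:ℝ)⁻¹)) ^ d := hL.symm
    _ ≤ (∑ i, (d:ℝ)⁻¹ * z i) ^ d := by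
        apply pow_le_pow_left₀ (Finset.prod_nonneg fun i _ => Real.rpow_nonneg (hz i) _) h
    _ = ((∑ i, z i) / d) ^ d := by
        rw [← Finset.mul_sum]
        ring_nf

/-- Derivative at 0 of a product of linear factors. -/
lemma gurvits_deriv {ι : Type*} [DecidableEq ι] (s : Finset ι) (r : ι → ℝ) :
    (Polynomial.derivative (∏ i ∈ s, (X + C (r i)))).eval 0
      = ∑ i ∈ s, ∏ j ∈ s.erase i, r j := by
  induction s using Finset.induction_on with
  | empty => simp
  | insert _ _ ha ih =>
    rename_i a s
    rw [Finset.prod_insert ha, derivative_mul, eval_add, eval_mul, eval_mul]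
    simp only [derivative_add, derivative_X, derivative_C, add_zero, eval_one, one_mul,
      eval_add, eval_X, eval_C, zero_add, ih]
    rw [Finset.sum_insert ha, Finset.erase_insert ha, eval_prod]
    simp only [eval_add, eval_X, eval_C, zero_add]
    rw [Finset.mul_sum]
    congr 1
    refine Finset.sum_congr rfl fun i hi => ?_
    rw [Finset.erase_insert_of_ne (by rintro rfl; exact ha hi),
      Finset.prod_insert (fun h => ha (Finset.mem_of_mem_erase h))]


lemma gurvits_keyB (d : ℕ) (hd : 2 ≤ d) (c : ℝ) (hc : 0 < c) (r : Fin d → ℝ)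
    (hr : ∀ i, 0 < r i) (f : ℝ[X]) (hfact : f = C c * ∏ i, (X + C (r i))) :
    ∃ t > 0, f.eval t / t
      ≤ ((d:ℝ)/((d:ℝ)-1))^(d-1) * (Polynomial.derivative f).eval 0 := by
  set D : ℝ := (d : ℝ) with hD
  have hD2 : (2:ℝ) ≤ D := by rw [hD]; exact_mod_cast hd
  have hD1 : 0 < D - 1 := by linarith
  have hD0 : 0 < D := by linarith
  set P : ℝ := ∏ i, r i with hPdef
  have hP : 0 < P := Finset.prod_pos fun i _ => hr i
  set S : ℝ := ∑ i, (r i)⁻¹ with hSdef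
  have hS : 0 < S := Finset.sum_pos (fun i _ => inv_pos.mpr (hr i))
    (univ_nonempty_iff.mpr ⟨⟨0, by omega⟩⟩)
  -- derivative at 0
  have ha1 : (Polynomial.derivative f).eval 0 = c * (P * S) := by
    rw [hfact, derivative_C_mul, eval_mul, eval_C, gurvits_deriv]
    congr 1
    rw [hSdef, Finset.mul_sum]
    refine Finset.sum_congr rfl fun i _ => ?_
    have h1 : (∏ j ∈ univ.erase i, r j) * r i = P :=
      Finset.prod_erase_mul univ r (mem_univ i)
    have h2 : r i ≠ 0 := (hr i).ne'
    field_simp at h1 ⊢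
    linarith [h1]
  -- the witness point
  refine ⟨D / ((D - 1) * S), by positivity, ?_⟩
  set t : ℝ := D / ((D - 1) * S) with htdef
  have ht : 0 < t := by positivity
  -- evaluation and AM-GM bound
  have heval : f.eval t = c * (P * ∏ i, (1 + t * (r i)⁻¹)) := by
    rw [hfact, eval_mul, eval_C, eval_prod]
    congr 1
    rw [hPdef, ← Finset.prod_mul_distrib]
    refine Finset.prod_congr rfl fun i _ => ?_
    have h2 : r i ≠ 0 := (hr i).ne'
    simp only [eval_add, eval_X, eval_C]
    field_simp
    ring
  have hsum : ∑ i, (1 + t * (r i)⁻¹) = D + t * S := by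
    rw [Finset.sum_add_distrib, ← Finset.mul_sum]
    simp [hSdef, Finset.card_univ, hD]
  have htS : t * S = D / (D - 1) := by
    rw [htdef]
    field_simp
  have hamgm : ∏ i, (1 + t * (r i)⁻¹) ≤ (D / (D - 1)) ^ d := by
    have h := gurvits_amgm d (by omega) (fun i => 1 + t * (r i)⁻¹)
      (fun i => by have := (hr i); positivity)
    rw [hsum, htS] at h
    have harg : (D + D / (D - 1)) / D = D / (D - 1) := by
      field_simp
      ring
    rwa [← hD, harg] at h
  have hft : f.eval t ≤ c * P * (D / (D - 1)) ^ d := by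
    rw [heval, ← mul_assoc]
    exact mul_le_mul_of_nonneg_left hamgm (by positivity)
  have hstep : f.eval t / t ≤ (c * P * (D / (D - 1)) ^ d) / t := by gcongr
  refine hstep.trans (le_of_eq ?_)
  rw [ha1]
  obtain ⟨e, he⟩ : ∃ e, d = e + 1 := ⟨d - 1, by omega⟩
  have he' : d - 1 = e := by omega
  rw [he', he, pow_succ, htdef]
  field_simp


lemma gurvits_eval_nonneg (f : ℝ[X]) (h : ∀ k, 0 ≤ f.coeff k) {x : ℝ} (hx : 0 ≤ x) :
    0 ≤ f.eval x := by
  rw [eval_eq_sum_range]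
  exact Finset.sum_nonneg fun i _ => mul_nonneg (h i) (pow_nonneg hx i)

lemma gurvits_eval_ge_const (f : ℝ[X]) (h : ∀ k, 0 ≤ f.coeff k) {x : ℝ} (hx : 0 ≤ x) :
    f.coeff 0 ≤ f.eval x := by
  rw [eval_eq_sum_range]
  have h0 : (0:ℕ) ∈ Finset.range (f.natDegree + 1) := by simp
  calc f.coeff 0 = f.coeff 0 * x ^ 0 := by simp
    _ ≤ ∑ i ∈ Finset.range (f.natDegree + 1), f.coeff i * x ^ i :=
        Finset.single_le_sum (fun i _ => mul_nonneg (h i) (pow_nonneg hx i)) h0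

lemma gurvits_caseA (f : ℝ[X]) (hcoeff : ∀ k, 0 ≤ f.coeff k) (hone : f.eval 1 = 1)
    (h0 : f.coeff 0 = 0) {t : ℝ} (ht : 0 < t) (ht1 : t ≤ 1) :
    f.eval t ≤ f.coeff 1 * t + t ^ 2 := by
  have hsum1 : ∑ i ∈ Finset.range (f.natDegree + 1), f.coeff i = 1 := by
    have := eval_eq_sum_range (p := f) (1 : ℝ)
    simpa [hone] using this.symm
  rw [eval_eq_sum_range]
  have key : ∀ i ∈ Finset.range (f.natDegree + 1),
      f.coeff i * t ^ i ≤ (if i = 1 then f.coeff 1 * t else 0) + f.coeff i * t ^ 2 := by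
    intro i _
    rcases Nat.lt_or_ge i 2 with h2 | h2
    · interval_cases i
      · simp only [h0, zero_mul, if_neg one_ne_zero.symm, zero_add]
        positivity
      · simp only [pow_one, if_true]
        have : (0:ℝ) ≤ f.coeff 1 * t ^ 2 := mul_nonneg (hcoeff 1) (by positivity)
        linarith
    · have : t ^ i ≤ t ^ 2 := pow_le_pow_of_le_one ht.le ht1 h2
      have := mul_le_mul_of_nonneg_left this (hcoeff i)
      simp [if_neg (by omega : ¬ i = 1)]
      linarith
  calc ∑ i ∈ Finset.range (f.natDegree + 1), f.coeff i * t ^ i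
      ≤ ∑ i ∈ Finset.range (f.natDegree + 1),
          ((if i = 1 then f.coeff 1 * t else 0) + f.coeff i * t ^ 2) :=
        Finset.sum_le_sum key
    _ = (if 1 ∈ Finset.range (f.natDegree + 1) then f.coeff 1 * t else 0)
          + (∑ i ∈ Finset.range (f.natDegree + 1), f.coeff i) * t ^ 2 := by
        rw [Finset.sum_add_distrib, Finset.sum_ite_eq' (Finset.range (f.natDegree + 1)) 1
          (fun _ => f.coeff 1 * t), Finset.sum_mul]
    _ ≤ f.coeff 1 * t + t ^ 2 := by
        rw [hsum1, one_mul]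
        have h1 : (0:ℝ) ≤ f.coeff 1 * t := mul_nonneg (hcoeff 1) ht.le
        split_ifs <;> linarith


/-- **Proposition (Gurvits' univariate bound).**
Let `f` be a real polynomial of degree `d ≥ 1` with nonnegative coefficients,
`f(1) = 1`, and all complex roots real.  With `C := inf_{t > 0} f(t)/t`, one has
`f'(0) ≥ ((d-1)/d)^{d-1} · C`. -/
theorem stmt6 (d : ℕ) (hd : 1 ≤ d) (f : Polynomial ℝ) (hdeg : f.natDegree = d)
    (hcoeff : ∀ k, 0 ≤ f.coeff k) (hone : f.eval 1 = 1)
    (hroots : ∀ z : ℂ, Polynomial.aeval z f = 0 → z.im = 0) :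
    (((d : ℝ) - 1) / (d : ℝ)) ^ (d - 1) *
        sInf ((fun t : ℝ => f.eval t / t) '' Set.Ioi 0) ≤
      (Polynomial.derivative f).eval 0 := by
  have hD0 : (0:ℝ) < (d:ℝ) := by exact_mod_cast hd
  have hD1 : (1:ℝ) ≤ (d:ℝ) := by exact_mod_cast hd
  set K := (fun t : ℝ => f.eval t / t) '' Set.Ioi 0 with hK
  have hmem : ∀ t : ℝ, 0 < t → f.eval t / t ∈ K := fun t ht => ⟨t, ht, rfl⟩
  have hne : K.Nonempty := ⟨f.eval 1 / 1, hmem 1 one_pos⟩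
  have hbdd : BddBelow K := by
    refine ⟨0, ?_⟩
    rintro y ⟨t, ht, rfl⟩
    have ht' : (0:ℝ) < t := ht
    exact div_nonneg (gurvits_eval_nonneg f hcoeff ht'.le) ht'.le
  have hCle : ∀ t : ℝ, 0 < t → sInf K ≤ f.eval t / t := fun t ht => csInf_le hbdd (hmem t ht)
  have hC0 : 0 ≤ sInf K := by
    refine le_csInf hne ?_
    rintro y ⟨t, ht, rfl⟩
    have ht' : (0:ℝ) < t := ht
    exact div_nonneg (gurvits_eval_nonneg f hcoeff ht'.le) ht'.le
  have ha1 : (Polynomial.derivative f).eval 0 = f.coeff 1 := by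
    rw [← coeff_zero_eq_eval_zero, coeff_derivative]
    norm_num
  have ha1n : 0 ≤ f.coeff 1 := hcoeff 1
  have hbase0 : 0 ≤ ((d:ℝ) - 1) / (d:ℝ) := div_nonneg (by linarith) hD0.le
  have hbase1 : ((d:ℝ) - 1) / (d:ℝ) ≤ 1 := by
    rw [div_le_one hD0]; linarith
  have hpow1 : (((d:ℝ) - 1) / (d:ℝ)) ^ (d - 1) ≤ 1 := pow_le_one₀ hbase0 hbase1
  have hpow0 : 0 ≤ (((d:ℝ) - 1) / (d:ℝ)) ^ (d - 1) := pow_nonneg hbase0 _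
  -- reduction: if sInf K ≤ f.coeff 1 we are done
  have reduce : sInf K ≤ f.coeff 1 →
      (((d : ℝ) - 1) / (d : ℝ)) ^ (d - 1) * sInf K ≤ (Polynomial.derivative f).eval 0 := by
    intro h
    rw [ha1]
    calc (((d : ℝ) - 1) / (d : ℝ)) ^ (d - 1) * sInf K ≤ 1 * sInf K :=
          mul_le_mul_of_nonneg_right hpow1 hC0
      _ = sInf K := one_mul _
      _ ≤ f.coeff 1 := h
  rcases eq_or_lt_of_le hd with hd1 | hd2
  · -- d = 1
    apply reduce
    have hd1' : f.natDegree = 1 := by omega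
    have heval : ∀ t : ℝ, f.eval t = f.coeff 0 + f.coeff 1 * t := by
      intro t
      rw [eval_eq_sum_range, hd1']
      simp [Finset.sum_range_succ]
    apply le_of_forall_sub_le
    intro ε hε
    have hεle : f.coeff 0 / ε ≤ max 1 (f.coeff 0 / ε) := le_max_right _ _
    set t := max 1 (f.coeff 0 / ε) with htdef
    have ht : (0:ℝ) < t := lt_of_lt_of_le one_pos (le_max_left _ _)
    have h1 : f.coeff 0 / t ≤ ε := by
      rw [div_le_iff₀ ht]
      calc f.coeff 0 = (f.coeff 0 / ε) * ε := by field_simp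
        _ ≤ t * ε := mul_le_mul_of_nonneg_right hεle hε.le
        _ = ε * t := mul_comm _ _
    have h2 : f.eval t / t = f.coeff 0 / t + f.coeff 1 := by
      rw [heval]; field_simp
    have := hCle t ht
    rw [h2] at this
    linarith
  · -- d ≥ 2
    by_cases h0 : f.coeff 0 = 0
    · -- coeff 0 = 0
      apply reduce
      apply le_of_forall_sub_le
      intro ε hε
      set t := min 1 ε with htdef
      have ht : (0:ℝ) < t := lt_min one_pos hε
      have ht1 : t ≤ 1 := min_le_left _ _
      have hb := gurvits_caseA f hcoeff hone h0 ht ht1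
      have h2 : (f.coeff 1 * t + t ^ 2) / t = f.coeff 1 + t := by
        field_simp
      have h3 : f.eval t / t ≤ f.coeff 1 + t := by
        rw [← h2]
        gcongr
      have := (hCle t ht).trans h3
      have h4 : t ≤ ε := min_le_right _ _
      linarith
    · -- coeff 0 > 0 : hard case
      have hdd : 2 ≤ d := hd2
      have hf0 : f ≠ 0 := fun h => by simp [h] at hone
      have hlc : 0 < f.leadingCoeff := by
        refine lt_of_le_of_ne ?_ (Ne.symm (leadingCoeff_ne_zero.mpr hf0))
        rw [leadingCoeff]
        exact hcoeff _
      have hsplits := gurvits_splits d f hdeg hroots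
      have hcard : Multiset.card f.roots = d := by
        rw [splits_iff_card_roots.mp hsplits, hdeg]
      have hneg : ∀ a ∈ f.roots, a < 0 := by
        intro a ha
        have hroot : f.eval a = 0 := (isRoot_of_mem_roots ha)
        by_contra hcon
        push_neg at hcon
        have := gurvits_eval_ge_const f hcoeff hcon
        have h0' : 0 < f.coeff 0 := lt_of_le_of_ne (hcoeff 0) (Ne.symm h0)
        linarith [this, hroot]
      set l := f.roots.toList with hldef
      have hlen : l.length = d := by rw [hldef, Multiset.length_toList, hcard]
      set r : Fin d → ℝ := fun i => -(l.get (Fin.cast hlen.symm i)) with hrdef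
      have hr : ∀ i, 0 < r i := by
        intro i
        have hm : l.get (Fin.cast hlen.symm i) ∈ f.roots := by
          rw [← Multiset.mem_toList]
          exact List.get_mem l _
        have := hneg _ hm
        simp only [hrdef]
        linarith
      have hfact : f = C f.leadingCoeff * ∏ i : Fin d, (X + C (r i)) := by
        have h1 := hsplits.eq_prod_roots
        have h2 : f.roots = (l : Multiset ℝ) := (Multiset.coe_toList f.roots).symm
        have hprod : (Multiset.map (fun a => X - C a) f.roots).prod
            = ∏ i : Fin d, (X + C (r i)) := by
          rw [h2]
          rw [show ((l : Multiset ℝ).map fun a => X - C a)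
              = ((l.map fun a => X - C a) : Multiset ℝ[X]) from rfl, Multiset.prod_coe]
          conv_lhs => rw [← List.ofFn_get l]
          rw [List.map_ofFn, List.prod_ofFn]
          have h3 : ∀ i : Fin d, X + C (r i) =
              (fun j : Fin l.length => X - C (l.get j)) (Fin.cast hlen.symm i) := by
            intro i
            simp only [hrdef, map_neg]
            ring
          calc (∏ j : Fin l.length, ((fun a => X - C a) ∘ l.get) j)
              = ∏ i : Fin d, (fun j : Fin l.length => X - C (l.get j)) (Fin.cast hlen.symm i) :=
                (Fin.prod_congr' _ hlen.symm).symm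
            _ = ∏ i : Fin d, (X + C (r i)) := by
                refine Finset.prod_congr rfl fun i _ => (h3 i).symm
        conv_lhs => rw [h1]
        rw [hprod]
      obtain ⟨t, ht, hkey⟩ := gurvits_keyB d hdd f.leadingCoeff hlc r hr f hfact
      have step1 : (((d : ℝ) - 1) / (d : ℝ)) ^ (d - 1) * sInf K
          ≤ (((d : ℝ) - 1) / (d : ℝ)) ^ (d - 1) * (f.eval t / t) :=
        mul_le_mul_of_nonneg_left (hCle t ht) hpow0
      have step2 : (((d : ℝ) - 1) / (d : ℝ)) ^ (d - 1) * (f.eval t / t)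
          ≤ (((d : ℝ) - 1) / (d : ℝ)) ^ (d - 1) *
            (((d:ℝ)/((d:ℝ)-1))^(d-1) * (Polynomial.derivative f).eval 0) :=
        mul_le_mul_of_nonneg_left hkey hpow0
      have hDm1 : (0:ℝ) < (d:ℝ) - 1 := by
        have : (2:ℝ) ≤ (d:ℝ) := by exact_mod_cast hdd
        linarith
      have step3 : (((d : ℝ) - 1) / (d : ℝ)) ^ (d - 1) *
            (((d:ℝ)/((d:ℝ)-1))^(d-1) * (Polynomial.derivative f).eval 0)
          = (Polynomial.derivative f).eval 0 := by
        rw [← mul_assoc, ← mul_pow]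
        have : ((d:ℝ) - 1) / (d:ℝ) * ((d:ℝ)/((d:ℝ)-1)) = 1 := by
          field_simp
        rw [this, one_pow, one_mul]
      linarith
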